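/- Let $f:A\to C$ be a ring homomorphism with kernel $I$, $B=A/I$ with induced maps $g:A\to B$, $h:B\to C$ (assume $h$ injective). Let $\widetilde C$ be a flat $A[\epsilon]/(\epsilon^2)$-deformation of $C$ with homomorphism $\widetilde f: A[\epsilon]/(\epsilon^2)\to\widetilde C$ lifting $f$, presented as $\widetilde C=A[\epsilon][C]/(J',\epsilon^2)$ where $J'$ is generated by $\{j+\phi(j)\epsilon : j\in J\}\cup\{j\epsilon: j\in J\}$ for some $\phi\in\operatorname{Hom}_C(J/J^2,C)$, $J=\ker(A[C]\to C)$. Then an element $x\in I$ admits a lift $x+x_1\epsilon\in\ker(\widetilde f)$ for some $x_1\in A$ if and only if $\phi(x)\in B\subset C$. -/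

import Mathlib

open MvPolynomial

noncomputable section

set_option maxHeartbeats 1000000
set_option synthInstance.maxHeartbeats 400000

variable (A C : Type*) [CommRing A] [CommRing C]

/-- the evaluation map `A[C] → C` from the polynomial ring on the set `C`. -/
def evMap (f : A →+* C) : MvPolynomial C A →+* C :=
  MvPolynomial.eval₂Hom f id

/-- `J = ker(A[C] → C)`. -/
def Jker (f : A →+* C) : Ideal (MvPolynomial C A) := RingHom.ker (evMap A C f)

/-- the induced map `A[ε] → C[ε]`. -/
def dmap (f : A →+* C) : DualNumber A →+* DualNumber C where
  toFun x := TrivSqZeroExt.inl (f x.fst) + TrivSqZeroExt.inr (f x.snd)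
  map_one' := by ext <;> simp
  map_mul' x y := by
    ext <;> simp [smul_eq_mul, MulOpposite.smul_eq_mul_unop]
  map_zero' := by ext <;> simp
  map_add' x y := by ext <;> simp

@[simp] lemma dmap_fst (f : A →+* C) (x : DualNumber A) : (dmap A C f x).fst = f x.fst := by
  simp [dmap]
@[simp] lemma dmap_snd (f : A →+* C) (x : DualNumber A) : (dmap A C f x).snd = f x.snd := by
  simp [dmap]
lemma dmap_eps (f : A →+* C) : dmap A C f DualNumber.eps = DualNumber.eps := by
  ext <;> simp

/-- the projection `A[ε][C] → A[C]` forgetting `ε`-parts of coefficients. -/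
def F0 : MvPolynomial C (DualNumber A) →+* MvPolynomial C A :=
  MvPolynomial.map (TrivSqZeroExt.fstHom A A A).toRingHom

/-- the evaluation `A[ε][C] → C[ε]`, `X c ↦ inl c`, coefficients via `dmap f`. -/
def Ev (f : A →+* C) : MvPolynomial C (DualNumber A) →+* DualNumber C :=
  MvPolynomial.eval₂Hom (dmap A C f) TrivSqZeroExt.inl

@[simp] lemma F0_C (a : DualNumber A) :
    F0 A C (MvPolynomial.C a) = MvPolynomial.C a.fst := by simp [F0]
@[simp] lemma F0_X (c : C) : F0 A C (MvPolynomial.X c) = MvPolynomial.X c := by simp [F0]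
@[simp] lemma Ev_C (f : A →+* C) (a : DualNumber A) :
    Ev A C f (MvPolynomial.C a) = dmap A C f a := by simp [Ev]
@[simp] lemma Ev_X (f : A →+* C) (c : C) :
    Ev A C f (MvPolynomial.X c) = TrivSqZeroExt.inl c := by simp [Ev]

lemma fst_Ev (f : A →+* C) (q : MvPolynomial C (DualNumber A)) :
    (Ev A C f q).fst = evMap A C f (F0 A C q) := by
  have h : ((TrivSqZeroExt.fstHom C C C).toRingHom.comp (Ev A C f)) =
      (evMap A C f).comp (F0 A C) := by
    apply MvPolynomial.ringHom_ext <;> intro a <;>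
      simp [evMap, MvPolynomial.eval₂Hom_X']
  exact congrArg (fun g => g q) h

lemma F0_map (j : MvPolynomial C A) :
    F0 A C (MvPolynomial.map (algebraMap A (DualNumber A)) j) = j := by
  rw [F0, MvPolynomial.map_map]
  have : (TrivSqZeroExt.fstHom A A A).toRingHom.comp (algebraMap A (DualNumber A)) =
      RingHom.id A := by ext a; rfl
  rw [this, MvPolynomial.map_id]

lemma Ev_map (f : A →+* C) (j : MvPolynomial C A) :
    Ev A C f (MvPolynomial.map (algebraMap A (DualNumber A)) j) =
      TrivSqZeroExt.inl (evMap A C f j) := by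
  rw [Ev, MvPolynomial.eval₂Hom_map_hom]
  have h1 : (dmap A C f).comp (algebraMap A (DualNumber A)) =
      (TrivSqZeroExt.inlHom C C).comp f := by
    ext a
    · show (dmap A C f (algebraMap A (DualNumber A) a)).fst = _
      simp [TrivSqZeroExt.algebraMap_eq_inl']
    · show (dmap A C f (algebraMap A (DualNumber A) a)).snd = _
      simp [TrivSqZeroExt.algebraMap_eq_inl']
  rw [h1]
  have h2 := MvPolynomial.eval₂_comp_left (TrivSqZeroExt.inlHom C C) f (id : C → C) j
  show MvPolynomial.eval₂ ((TrivSqZeroExt.inlHom C C).comp f) TrivSqZeroExt.inl j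
      = TrivSqZeroExt.inl (evMap A C f j)
  have h3 : MvPolynomial.eval₂ ((TrivSqZeroExt.inlHom C C).comp f)
      (⇑(TrivSqZeroExt.inlHom C C) ∘ id) j
      = MvPolynomial.eval₂ ((TrivSqZeroExt.inlHom C C).comp f) TrivSqZeroExt.inl j := rfl
  rw [← h3, ← h2]
  rfl

-- computations on the generators
lemma F0_gen1 (c : C) (j : MvPolynomial C A) :
    F0 A C (MvPolynomial.map (algebraMap A (DualNumber A)) j +
      MvPolynomial.X c * MvPolynomial.C DualNumber.eps) = j := by
  rw [RingHom.map_add, RingHom.map_mul, F0_map A C, F0_X, F0_C]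
  simp [DualNumber.fst_eps]

lemma F0_gen2 (j : MvPolynomial C A) :
    F0 A C (MvPolynomial.map (algebraMap A (DualNumber A)) j *
      MvPolynomial.C DualNumber.eps) = 0 := by
  rw [RingHom.map_mul, F0_map A C, F0_C]
  simp [DualNumber.fst_eps]

lemma Ev_gen1 (f : A →+* C) (c : C) (j : MvPolynomial C A) (hj : evMap A C f j = 0) :
    (Ev A C f (MvPolynomial.map (algebraMap A (DualNumber A)) j +
      MvPolynomial.X c * MvPolynomial.C DualNumber.eps)).snd = c := by
  rw [RingHom.map_add, RingHom.map_mul, Ev_map, Ev_X, Ev_C, hj, dmap_eps]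
  simp [TrivSqZeroExt.snd_mul, smul_eq_mul, MulOpposite.smul_eq_mul_unop,
    DualNumber.fst_eps, DualNumber.snd_eps]

lemma Ev_gen2 (f : A →+* C) (j : MvPolynomial C A) (hj : evMap A C f j = 0) :
    (Ev A C f (MvPolynomial.map (algebraMap A (DualNumber A)) j *
      MvPolynomial.C DualNumber.eps)).snd = 0 := by
  rw [RingHom.map_mul, Ev_map, Ev_C, hj, dmap_eps]
  simp [TrivSqZeroExt.snd_mul, smul_eq_mul, MulOpposite.smul_eq_mul_unop,
    DualNumber.fst_eps, DualNumber.snd_eps]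

lemma target_fst (x x₁ : A) :
    (algebraMap A (DualNumber A) x + algebraMap A (DualNumber A) x₁ * DualNumber.eps).fst
      = x := by
  simp [TrivSqZeroExt.algebraMap_eq_inl', DualNumber.fst_eps]

lemma target_snd (x x₁ : A) :
    (algebraMap A (DualNumber A) x + algebraMap A (DualNumber A) x₁ * DualNumber.eps).snd
      = x₁ := by
  simp [TrivSqZeroExt.algebraMap_eq_inl', smul_eq_mul, MulOpposite.smul_eq_mul_unop,
    DualNumber.fst_eps, DualNumber.snd_eps]

/-- let `f : A → C` with kernel `I`, `B = A/I ⊆ C`.  Let `φ ∈ Hom_C(J/J², C)`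
(encoded as an additive map `φ : J → C` with `φ(p·j) = ev(p)·φ(j)`), and let the
deformation `C̃ = A[ε][C]/(J', ε²)` be presented with
`J' = ({j + φ(j)ε} ∪ {jε} : j ∈ J)`.  Then `x ∈ I` admits a lift `x + x₁ε ∈ ker(f̃)`
(i.e. `x + x₁ε ∈ J'` for some `x₁ ∈ A`) if and only if `φ(x) ∈ B`, i.e. `φ(x)` lies in the
image of `A → C`. -/
theorem deformation_lift_iff (f : A →+* C) (φ : Jker A C f → C)
    (hadd : ∀ j j' : Jker A C f, φ (j + j') = φ j + φ j')
    (hlin : ∀ (p : MvPolynomial C A) (j : Jker A C f)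
      (hpj : p * (j : MvPolynomial C A) ∈ Jker A C f),
      φ ⟨p * (j : MvPolynomial C A), hpj⟩ = evMap A C f p * φ j) :
    ∀ (x : A) (hx : (MvPolynomial.C x : MvPolynomial C A) ∈ Jker A C f),
      (∃ x₁ : A,
        (MvPolynomial.C (algebraMap A (DualNumber A) x +
            algebraMap A (DualNumber A) x₁ * DualNumber.eps) :
            MvPolynomial C (DualNumber A)) ∈
          Ideal.span
            ({q | ∃ j : Jker A C f,
                q = MvPolynomial.map (algebraMap A (DualNumber A)) (j : MvPolynomial C A) +
                  MvPolynomial.X (φ j) * MvPolynomial.C DualNumber.eps} ∪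
             {q | ∃ j : Jker A C f,
                q = MvPolynomial.map (algebraMap A (DualNumber A)) (j : MvPolynomial C A) *
                  MvPolynomial.C DualNumber.eps})) ↔
      φ ⟨MvPolynomial.C x, hx⟩ ∈ Set.range f := by
  intro x hx
  have hφ0 : φ 0 = 0 := by
    have h := hadd 0 0
    rw [add_zero] at h
    exact left_eq_add.mp h
  constructor
  · rintro ⟨x₁, hmem⟩
    have key : ∀ (q : MvPolynomial C (DualNumber A)),
        q ∈ Ideal.span
            ({q | ∃ j : Jker A C f,
                q = MvPolynomial.map (algebraMap A (DualNumber A)) (j : MvPolynomial C A) +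
                  MvPolynomial.X (φ j) * MvPolynomial.C DualNumber.eps} ∪
             {q | ∃ j : Jker A C f,
                q = MvPolynomial.map (algebraMap A (DualNumber A)) (j : MvPolynomial C A) *
                  MvPolynomial.C DualNumber.eps}) →
        ∃ h : F0 A C q ∈ Jker A C f, φ ⟨F0 A C q, h⟩ = (Ev A C f q).snd := by
      intro q hq
      refine Submodule.span_induction ?_ ?_ ?_ ?_ hq
      · rintro q (⟨j, rfl⟩ | ⟨j, rfl⟩)
        · rw [F0_gen1]
          refine ⟨j.2, ?_⟩
          rw [Ev_gen1 A C f _ _ j.2]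
        · rw [F0_gen2]
          refine ⟨Submodule.zero_mem _, ?_⟩
          rw [Ev_gen2 A C f _ j.2]
          exact hφ0
      · have hF00 : F0 A C (0 : MvPolynomial C (DualNumber A)) = 0 := RingHom.map_zero _
        have hEv0 : Ev A C f (0 : MvPolynomial C (DualNumber A)) = 0 := RingHom.map_zero _
        rw [hF00, hEv0]
        refine ⟨Submodule.zero_mem _, ?_⟩
        show φ 0 = TrivSqZeroExt.snd (0 : DualNumber C)
        rw [hφ0]
        rfl
      · rintro a b _ _ ⟨ha, hφa⟩ ⟨hb, hφb⟩
        rw [RingHom.map_add]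
        refine ⟨Submodule.add_mem _ ha hb, ?_⟩
        have heq : (⟨F0 A C a + F0 A C b, Submodule.add_mem _ ha hb⟩ : Jker A C f)
            = ⟨F0 A C a, ha⟩ + ⟨F0 A C b, hb⟩ := rfl
        rw [heq, hadd, hφa, hφb, RingHom.map_add, TrivSqZeroExt.snd_add]
      · rintro p q _ ⟨hq, hφq⟩
        rw [smul_eq_mul, RingHom.map_mul]
        have hmem' : F0 A C p * F0 A C q ∈ Jker A C f := Ideal.mul_mem_left _ _ hq
        refine ⟨hmem', ?_⟩
        rw [hlin (F0 A C p) ⟨F0 A C q, hq⟩ hmem', hφq]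
        have hfst : (Ev A C f q).fst = 0 := by
          rw [fst_Ev]; exact hq
        rw [RingHom.map_mul, TrivSqZeroExt.snd_mul, hfst, fst_Ev]
        simp [smul_eq_mul, MulOpposite.smul_eq_mul_unop]
    obtain ⟨h, hφeq⟩ := key _ hmem
    refine ⟨x₁, ?_⟩
    have e1 : F0 A C (MvPolynomial.C (algebraMap A (DualNumber A) x +
        algebraMap A (DualNumber A) x₁ * DualNumber.eps)) = MvPolynomial.C x := by
      rw [F0_C, target_fst]
    have e2 : φ ⟨MvPolynomial.C x, hx⟩ = φ ⟨F0 A C (MvPolynomial.C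
        (algebraMap A (DualNumber A) x + algebraMap A (DualNumber A) x₁ * DualNumber.eps)), h⟩ :=
      congrArg φ (Subtype.ext e1.symm)
    rw [e2, hφeq, Ev_C, dmap_snd, target_snd]
  · rintro ⟨x₁, hx₁⟩
    refine ⟨x₁, ?_⟩
    set jx : Jker A C f := ⟨MvPolynomial.C x, hx⟩ with hjx
    have hj' : (MvPolynomial.C x₁ - MvPolynomial.X (φ jx) : MvPolynomial C A) ∈ Jker A C f := by
      refine RingHom.mem_ker.mpr ?_
      rw [RingHom.map_sub]
      have h1 : evMap A C f (MvPolynomial.C x₁) = f x₁ := by simp [evMap]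
      have h2 : evMap A C f (MvPolynomial.X (φ jx)) = φ jx := by simp [evMap]
      rw [h1, h2, hx₁, sub_self]
    set j' : Jker A C f := ⟨_, hj'⟩ with hj'def
    have hid : (MvPolynomial.C (algebraMap A (DualNumber A) x +
            algebraMap A (DualNumber A) x₁ * DualNumber.eps) :
            MvPolynomial C (DualNumber A)) =
        (MvPolynomial.map (algebraMap A (DualNumber A)) (jx : MvPolynomial C A) +
          MvPolynomial.X (φ jx) * MvPolynomial.C DualNumber.eps) +
        (MvPolynomial.map (algebraMap A (DualNumber A)) (j' : MvPolynomial C A) *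
          MvPolynomial.C DualNumber.eps) := by
      show (MvPolynomial.C (algebraMap A (DualNumber A) x +
            algebraMap A (DualNumber A) x₁ * DualNumber.eps) :
            MvPolynomial C (DualNumber A)) =
        (MvPolynomial.map (algebraMap A (DualNumber A)) (MvPolynomial.C x) +
          MvPolynomial.X (φ jx) * MvPolynomial.C DualNumber.eps) +
        (MvPolynomial.map (algebraMap A (DualNumber A))
            (MvPolynomial.C x₁ - MvPolynomial.X (φ jx)) *
          MvPolynomial.C DualNumber.eps)
      simp only [map_sub, map_add, map_mul, MvPolynomial.map_C, MvPolynomial.map_X]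
      ring
    rw [hid]
    refine Ideal.add_mem _ ?_ ?_
    · exact Ideal.subset_span (Or.inl ⟨jx, rfl⟩)
    · exact Ideal.subset_span (Or.inr ⟨j', rfl⟩)
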